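/- The Galois group of the polynomial x^4 + 3x^3 - 6x^2 - 18x - 9 over ℚ is cyclic of order 4. -/

import Mathlib

open Polynomial

-- Step 1: irreducibility over ℤ via Eisenstein at 5 (of the shift f(X+3))
private noncomputable def P4 : ℤ[X] := X ^ 4 + C 15 * X ^ 3 + C 75 * X ^ 2 + C 135 * X + C 45

private lemma P4_monic : P4.Monic := by unfold P4; monicity!

private lemma P4_natDegree : P4.natDegree = 4 := by unfold P4; compute_degree!

private lemma P4_irred : Irreducible P4 := by
  have heis : P4.IsEisensteinAt (Ideal.span {(5 : ℤ)}) := by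
    constructor
    · rw [P4_monic.leadingCoeff, Ideal.mem_span_singleton]; norm_num
    · intro n hn
      rw [P4_natDegree] at hn
      rw [Ideal.mem_span_singleton]
      interval_cases n <;> · simp [P4, coeff_X] <;> norm_num
    · rw [Ideal.span_singleton_pow, Ideal.mem_span_singleton]
      simp [P4] <;> norm_num
  exact heis.irreducible ((Ideal.span_singleton_prime (by norm_num)).mpr (by norm_num))
    P4_monic.isPrimitive (by rw [P4_natDegree]; norm_num)

private lemma q4_irred : Irreducible (X ^ 4 + 3 * X ^ 3 - 6 * X ^ 2 - 18 * X - 9 : ℚ[X]) := by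
  have h1 : Irreducible (P4.map (algebraMap ℤ ℚ)) :=
    (P4_monic.irreducible_iff_irreducible_map_fraction_map (K := ℚ)).mp P4_irred
  have h2 : (X ^ 4 + 3 * X ^ 3 - 6 * X ^ 2 - 18 * X - 9 : ℚ[X])
      = (algEquivAevalXAddC (-3 : ℚ)) (P4.map (algebraMap ℤ ℚ)) := by
    simp only [P4, algEquivAevalXAddC_apply, Polynomial.map_add, Polynomial.map_mul,
      Polynomial.map_pow, Polynomial.map_C, Polynomial.map_X, map_add, map_mul, map_pow,
      aeval_X, aeval_C, map_ofNat, Polynomial.map_ofNat, map_neg, eq_intCast, Int.cast_ofNat]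
    ring
  rw [h2]
  exact h1.map (algEquivAevalXAddC (-3 : ℚ))

private instance q4_fact : Fact (Irreducible (X ^ 4 + 3 * X ^ 3 - 6 * X ^ 2 - 18 * X - 9 : ℚ[X])) :=
  ⟨q4_irred⟩

private noncomputable abbrev K4 : Type :=
  AdjoinRoot (X ^ 4 + 3 * X ^ 3 - 6 * X ^ 2 - 18 * X - 9 : ℚ[X])

private noncomputable instance K4_algebra : Algebra ℚ K4 := AdjoinRoot.instAlgebra _

private lemma q4_monic : (X ^ 4 + 3 * X ^ 3 - 6 * X ^ 2 - 18 * X - 9 : ℚ[X]).Monic := by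
  monicity!

private lemma q4_natDegree : (X ^ 4 + 3 * X ^ 3 - 6 * X ^ 2 - 18 * X - 9 : ℚ[X]).natDegree = 4 := by
  compute_degree!

private noncomputable def α : K4 :=
  AdjoinRoot.root (X ^ 4 + 3 * X ^ 3 - 6 * X ^ 2 - 18 * X - 9 : ℚ[X])

private lemma hα : α ^ 4 + 3 * α ^ 3 - 6 * α ^ 2 - 18 * α - 9 = 0 := by
  have h : (aeval α) (X ^ 4 + 3 * X ^ 3 - 6 * X ^ 2 - 18 * X - 9 : ℚ[X]) = 0 := by
    rw [α, AdjoinRoot.aeval_eq, AdjoinRoot.mk_self]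
  simpa [map_ofNat] using h

private noncomputable def a1 : K4 := 2/3 * α^3 + α^2 - 6*α - 6
private noncomputable def a2 : K4 := -α^3 - 2*α^2 + 8*α + 9
private noncomputable def a3 : K4 := 1/3 * α^3 + α^2 - 3*α - 6
private noncomputable def s4 : K4 := α^3 + 2*α^2 - 9*α - 12

private lemma hsum13 : a1 + a3 = s4 := by unfold a1 a3 s4; ring

private lemma hprod13 : a1 * a3 = -s4 := by
  unfold a1 a3 s4
  linear_combination (-8/3 + 1/3*α + 2/9*α^2) * hα

private lemma hC4 : (C α)^4 + 3*(C α)^3 - 6*(C α)^2 - 18*(C α) - 9 = (0 : K4[X]) := by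
  have h := congrArg C hα
  simpa [map_ofNat] using h

private lemma hfactor :
    (X ^ 4 + 3 * X ^ 3 - 6 * X ^ 2 - 18 * X - 9 : ℚ[X]).map (algebraMap ℚ K4)
      = (X - C α) * (X - C a2) * ((X - C a1) * (X - C a3)) := by
  have h2 : (X - C a1) * (X - C a3) = X^2 - C s4 * X - C s4 := by
    have h : (X - C a1) * (X - C a3) = X^2 - (C a1 + C a3) * X + C a1 * C a3 := by ring
    rw [h, ← map_add, ← map_mul, hsum13, hprod13, map_neg]
    ring
  rw [h2]
  unfold a2 s4
  simp only [Polynomial.map_add, Polynomial.map_sub, Polynomial.map_mul, Polynomial.map_pow,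
    Polynomial.map_X, Polynomial.map_ofNat, map_add, map_sub, map_mul, map_pow, map_neg,
    map_ofNat]
  linear_combination ((1 : K4[X]) + 10*(C α) - (C α)^2 - (C α)^3
    + ((-10 : K4[X]) + 11*(C α) - (C α)^3) * X
    + ((-10 : K4[X]) + (C α) + (C α)^2) * X^2) * hC4

private lemma hsplits :
    Splits ((X ^ 4 + 3 * X ^ 3 - 6 * X ^ 2 - 18 * X - 9 : ℚ[X]).map (algebraMap ℚ K4)) := by
  rw [splits_iff_exists_multiset]
  refine ⟨{α, a2, a1, a3}, ?_⟩
  rw [(q4_monic.map _).leadingCoeff, hfactor]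
  simp only [Multiset.insert_eq_cons, Multiset.map_cons, Multiset.map_singleton,
    Multiset.prod_cons, Multiset.prod_singleton, map_one, C_1, one_mul]
  ring

private lemma haroot : (aeval α) (X ^ 4 + 3 * X ^ 3 - 6 * X ^ 2 - 18 * X - 9 : ℚ[X]) = 0 := by
  rw [α, AdjoinRoot.aeval_eq, AdjoinRoot.mk_self]

private instance K4_isSplittingField :
    IsSplittingField ℚ K4 (X ^ 4 + 3 * X ^ 3 - 6 * X ^ 2 - 18 * X - 9 : ℚ[X]) := by
  constructor
  · exact hsplits
  · rw [eq_top_iff, ← AdjoinRoot.adjoinRoot_eq_top]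
    apply Algebra.adjoin_mono
    rw [Set.singleton_subset_iff, Polynomial.mem_rootSet]
    exact ⟨q4_monic.ne_zero, haroot⟩

private instance K4_finiteDimensional : FiniteDimensional ℚ K4 :=
  Module.Finite.of_basis (AdjoinRoot.powerBasis q4_monic.ne_zero).basis

private lemma K4_finrank : Module.finrank ℚ K4 = 4 := by
  rw [PowerBasis.finrank (AdjoinRoot.powerBasis q4_monic.ne_zero)]
  simpa [AdjoinRoot.powerBasis] using q4_natDegree

private instance K4_isGalois : IsGalois ℚ K4 :=
  IsGalois.of_separable_splitting_field q4_irred.separable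

private lemma K4_card_aut : Nat.card (K4 ≃ₐ[ℚ] K4) = 4 := by
  rw [IsGalois.card_aut_eq_finrank, K4_finrank]

private lemma ha1root : (aeval a1) (X ^ 4 + 3 * X ^ 3 - 6 * X ^ 2 - 18 * X - 9 : ℚ[X]) = 0 := by
  simp only [map_add, map_sub, map_mul, map_pow, aeval_X, map_ofNat]
  unfold a1
  linear_combination (-59 - 206*α - 356/3*α^2 + 95*α^3 + 389/9*α^4 - 40/3*α^5
    - 136/27*α^6 + 16/27*α^7 + 16/81*α^8) * hα

private noncomputable def σ4 : K4 ≃ₐ[ℚ] K4 :=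
  AlgEquiv.ofBijective (AdjoinRoot.liftAlgHom _ (Algebra.ofId ℚ K4) a1 ha1root)
    (Algebra.IsAlgebraic.algHom_bijective _)

private lemma hσ4α : σ4 α = a1 := by
  rw [σ4, AlgEquiv.coe_ofBijective, α]
  exact AdjoinRoot.liftAlgHom_root (p := (X ^ 4 + 3 * X ^ 3 - 6 * X ^ 2 - 18 * X - 9 : ℚ[X]))
    (i := Algebra.ofId ℚ K4) (x := a1) (h := ha1root)

private lemma a1_def : a1 = 2/3 * α^3 + α^2 - 6*α - 6 := rfl

private lemma hσ4sq : ¬ σ4 ^ 2 = 1 := by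
  intro h
  have h2 : σ4 (σ4 α) = α := by
    have h1 : (σ4 * σ4) α = (1 : K4 ≃ₐ[ℚ] K4) α := by rw [← sq, h]
    simpa using h1
  rw [hσ4α] at h2
  have h3 : σ4 a1 = 2/3 * a1^3 + a1^2 - 6*a1 - 6 := by
    conv_lhs => rw [a1_def]
    simp only [map_add, map_sub, map_mul, map_pow, map_ofNat, map_div₀, hσ4α]
  rw [h3] at h2
  have hq : (aeval α) (X^3 + 2*X^2 - 7*X - 9 : ℚ[X]) = 0 := by
    simp only [map_add, map_sub, map_mul, map_pow, aeval_X, map_ofNat]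
    rw [a1_def] at h2
    linear_combination (-1 : K4) * h2 + (29/3 + 158/9*α - 34/9*α^2 - 100/27*α^3
      + 8/27*α^4 + 16/81*α^5) * hα
  have hmin : minpoly ℚ α = (X ^ 4 + 3 * X ^ 3 - 6 * X ^ 2 - 18 * X - 9 : ℚ[X]) := by
    rw [α, AdjoinRoot.minpoly_root q4_monic.ne_zero, q4_monic.leadingCoeff]
    simp
  have hdvd := minpoly.dvd ℚ α hq
  rw [hmin] at hdvd
  have hd3 : (X^3 + 2*X^2 - 7*X - 9 : ℚ[X]).natDegree = 3 := by compute_degree!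
  have hne : (X^3 + 2*X^2 - 7*X - 9 : ℚ[X]) ≠ 0 := by
    intro h0; rw [h0] at hd3; simp at hd3
  have hle := Polynomial.natDegree_le_of_dvd hdvd hne
  rw [q4_natDegree, hd3] at hle
  norm_num at hle

private lemma hσ4order : orderOf σ4 = 4 := by
  have h4 : σ4 ^ 4 = 1 := by
    have := pow_card_eq_one' (x := σ4)
    rwa [K4_card_aut] at this
  have := orderOf_eq_prime_pow (x := σ4) (p := 2) (n := 1)
    (by norm_num; exact hσ4sq) (by norm_num; exact h4)
  simpa using this

private lemma K4_isCyclic : IsCyclic (K4 ≃ₐ[ℚ] K4) :=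
  isCyclic_of_orderOf_eq_card σ4 (by rw [hσ4order, K4_card_aut])

/-- The Galois group of `x^4 + 3x^3 - 6x^2 - 18x - 9` over `ℚ` is cyclic of order 4. -/
theorem gal_of_quartic_over_Q_is_C4 :
    IsCyclic (X ^ 4 + 3 * X ^ 3 - 6 * X ^ 2 - 18 * X - 9 : ℚ[X]).Gal ∧
      Nat.card (X ^ 4 + 3 * X ^ 3 - 6 * X ^ 2 - 18 * X - 9 : ℚ[X]).Gal = 4 := by
  have e := Polynomial.IsSplittingField.algEquiv K4
    (X ^ 4 + 3 * X ^ 3 - 6 * X ^ 2 - 18 * X - 9 : ℚ[X])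
  have me : (K4 ≃ₐ[ℚ] K4) ≃*
      (X ^ 4 + 3 * X ^ 3 - 6 * X ^ 2 - 18 * X - 9 : ℚ[X]).Gal := AlgEquiv.autCongr e
  haveI := K4_isCyclic
  refine ⟨isCyclic_of_surjective me me.surjective, ?_⟩
  exact (Nat.card_congr me.toEquiv).symm.trans K4_card_aut
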